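/- Let G be a topological group and let K ≤ H ≤ G be closed subgroups such that the translation action of G on G/H is distal and the translation action of H on H/K is distal. Then the translation action of G on G/K is distal. -/

import Mathlib

open Topology Filter Set

lemma auxA {G : Type*} [Group G] [TopologicalSpace G] [IsTopologicalGroup G]
    (K H : Subgroup G) (hKH : K ≤ H) {α : Type*} {l : Filter α} {f : α → H}
    (hf : Tendsto (fun a => (((f a : G) : G ⧸ K))) l (𝓝 ((1:G) : G ⧸ K))) :
    Tendsto (fun a => (QuotientGroup.mk (f a) : H ⧸ K.subgroupOf H)) l
      (𝓝 ((QuotientGroup.mk 1 : H ⧸ K.subgroupOf H))) := by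
  intro V hV
  have h1 : ((QuotientGroup.mk : H → H ⧸ K.subgroupOf H) ⁻¹' V) ∈ 𝓝 (1 : H) := by
    have hc : ContinuousAt (QuotientGroup.mk : H → H ⧸ K.subgroupOf H) 1 :=
      QuotientGroup.continuous_mk.continuousAt
    have := hc hV
    exact this
  rw [nhds_induced] at h1
  obtain ⟨W, hW, hWsub⟩ := h1
  have hU : (QuotientGroup.mk : G → G ⧸ K) '' W ∈ 𝓝 ((1 : G) : G ⧸ K) :=
    QuotientGroup.isOpenMap_coe.image_mem_nhds hW

  rw [Filter.mem_map]
  refine Filter.mem_of_superset (Filter.mem_map.mp (hf hU)) ?_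
  intro a ha
  simp only [Set.mem_preimage] at ha ⊢
  obtain ⟨w, hwW, hw⟩ := ha
  have hwK : w⁻¹ * (f a : G) ∈ K := QuotientGroup.eq.mp hw
  have hwH : w ∈ H := by
    have h2 : (w⁻¹ * (f a : G))⁻¹ ∈ H := H.inv_mem (hKH hwK)
    have := H.mul_mem (f a).2 h2
    simpa [mul_assoc] using this
  have h2 : (QuotientGroup.mk (⟨w, hwH⟩ : H) : H ⧸ K.subgroupOf H) ∈ V := hWsub hwW
  have h3 : (QuotientGroup.mk (⟨w, hwH⟩ : H) : H ⧸ K.subgroupOf H) = QuotientGroup.mk (f a) := by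
    rw [QuotientGroup.eq]
    rw [Subgroup.mem_subgroupOf]
    simpa using hwK
  rw [← h3]
  exact h2


/-- Codistality is transitive: if `K ≤ H ≤ G` are closed subgroups with `G` acting distally
on `G/H` and `H` acting distally on `H/K` (by left translation), then `G` acts distally on
`G/K`. -/
theorem codistal_trans {G : Type*} [Group G] [TopologicalSpace G] [IsTopologicalGroup G]
    (K H : Subgroup G) (hKH : K ≤ H)
    (hKc : IsClosed (K : Set G)) (hHc : IsClosed (H : Set G))
    (hGH : ∀ x y : G, (QuotientGroup.mk x : G ⧸ H) ≠ QuotientGroup.mk y →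
      ¬ ∃ z : G ⧸ H, (z, z) ∈ closure {p : (G ⧸ H) × (G ⧸ H) |
        ∃ g : G, p = (QuotientGroup.mk (g * x), QuotientGroup.mk (g * y))})
    (hHK : ∀ a b : H, (QuotientGroup.mk a : H ⧸ K.subgroupOf H) ≠ QuotientGroup.mk b →
      ¬ ∃ z : H ⧸ K.subgroupOf H, (z, z) ∈ closure
        {p : (H ⧸ K.subgroupOf H) × (H ⧸ K.subgroupOf H) |
          ∃ h : H, p = (QuotientGroup.mk (h * a), QuotientGroup.mk (h * b))}) :
    ∀ x y : G, (QuotientGroup.mk x : G ⧸ K) ≠ QuotientGroup.mk y →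
      ¬ ∃ z : G ⧸ K, (z, z) ∈ closure {p : (G ⧸ K) × (G ⧸ K) |
        ∃ g : G, p = (QuotientGroup.mk (g * x), QuotientGroup.mk (g * y))} := by
  classical
  rintro x y hxy ⟨z, hz⟩
  set S : Set ((G ⧸ K) × (G ⧸ K)) := {p | ∃ g : G,
    p = (QuotientGroup.mk (g * x), QuotientGroup.mk (g * y))} with hS
  -- the projection G⧸K → G⧸H
  let p : G ⧸ K → G ⧸ H := fun a => Quotient.liftOn' a (QuotientGroup.mk : G → G ⧸ H)
    (fun a b hab => QuotientGroup.eq.mpr (hKH (QuotientGroup.leftRel_apply.mp hab)))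
  have hp : Continuous p := by
    rw [(QuotientGroup.isQuotientMap_mk K).continuous_iff]
    exact QuotientGroup.continuous_mk
  have hpmk : ∀ g : G, p (QuotientGroup.mk g) = QuotientGroup.mk g := fun _ => rfl
  -- Step 1: x and y have the same image in G⧸H
  have hxyH : (QuotientGroup.mk x : G ⧸ H) = QuotientGroup.mk y := by
    by_contra hne
    refine hGH x y hne ⟨p z, ?_⟩
    have h1 : ((p z, p z) : (G ⧸ H) × (G ⧸ H)) = Prod.map p p (z, z) := rfl
    rw [h1]
    have h2 : Prod.map p p (z, z) ∈ closure (Prod.map p p '' S) :=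
      image_closure_subset_closure_image (hp.prodMap hp) ⟨(z, z), hz, rfl⟩
    refine closure_mono ?_ h2
    rintro ⟨u, v⟩ ⟨⟨a, b⟩, ⟨g, hg⟩, hmap⟩
    refine ⟨g, ?_⟩
    rw [← hmap, hg]
    rfl
  have hH0 : x⁻¹ * y ∈ H := QuotientGroup.eq.mp hxyH
  have hK0 : x⁻¹ * y ∉ K := fun h => hxy (QuotientGroup.eq.mpr h)
  set h₀ : H := ⟨x⁻¹ * y, hH0⟩ with hh₀
  -- Step 2: filters
  set z₀ : G := Quotient.out z with hz₀def
  have hz₀ : QuotientGroup.mk z₀ = z := QuotientGroup.out_eq' z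
  set φ : G → (G ⧸ K) × (G ⧸ K) := fun g =>
    (QuotientGroup.mk (g * x), QuotientGroup.mk (g * y)) with hφdef
  have hzcl : ClusterPt (z, z) (𝓟 S) := mem_closure_iff_clusterPt.mp hz
  set F : Filter ((G ⧸ K) × (G ⧸ K)) := 𝓝 (z, z) ⊓ 𝓟 S with hFdef
  have hF : F.NeBot := hzcl
  set F' : Filter G := Filter.comap φ F with hF'def
  have hF' : F'.NeBot := by
    refine Filter.comap_neBot fun U hU => ?_
    have hSU : S ∩ U ∈ F := inter_mem (mem_inf_of_right (mem_principal_self S)) hU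
    obtain ⟨u, hu⟩ := hF.nonempty_of_mem hSU
    obtain ⟨g, hg⟩ := hu.1
    refine ⟨g, ?_⟩
    have h5 : φ g = u := hg.symm
    rw [h5]
    exact hu.2
  have hφt : Tendsto φ F' (𝓝 (z, z)) :=
    le_trans Filter.map_comap_le inf_le_left
  rw [nhds_prod_eq] at hφt
  have htx : Tendsto (fun g : G => (QuotientGroup.mk (g * x) : G ⧸ K)) F' (𝓝 z) :=
    (Filter.tendsto_prod_iff'.mp hφt).1
  have hty : Tendsto (fun g : G => (QuotientGroup.mk (g * y) : G ⧸ K)) F' (𝓝 z) :=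
    (Filter.tendsto_prod_iff'.mp hφt).2
  -- Step 3: lifting filter
  set D : Set (G × G) := {q | (QuotientGroup.mk q.2 : G ⧸ K) = QuotientGroup.mk (q.1 * x)}
    with hDdef
  set Λ : Filter (G × G) := (F' ×ˢ 𝓝 z₀) ⊓ 𝓟 D with hΛdef
  have hΛ : Λ.NeBot := by
    rw [hΛdef, Filter.inf_principal_neBot_iff]
    intro U hU
    rw [Filter.mem_prod_iff] at hU
    obtain ⟨A, hA, B, hB, hAB⟩ := hU
    have hqB : (QuotientGroup.mk : G → G ⧸ K) '' B ∈ 𝓝 z := by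
      rw [← hz₀, QuotientGroup.nhds_eq]
      exact image_mem_map hB
    have hpre := htx hqB
    obtain ⟨g, hgA, hgB⟩ := hF'.nonempty_of_mem (inter_mem hA (Filter.mem_map.mp hpre))
    obtain ⟨c, hcB, hc⟩ := hgB
    exact ⟨(g, c), hAB ⟨hgA, hcB⟩, hc⟩
  haveI := hΛ
  have htg : Tendsto Prod.fst Λ F' := tendsto_fst.mono_left inf_le_left
  have htc : Tendsto Prod.snd Λ (𝓝 z₀) := tendsto_snd.mono_left inf_le_left
  have htxΛ : Tendsto (fun q : G × G => (QuotientGroup.mk (q.1 * x) : G ⧸ K)) Λ (𝓝 z) :=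
    htx.comp htg
  have htyΛ : Tendsto (fun q : G × G => (QuotientGroup.mk (q.1 * y) : G ⧸ K)) Λ (𝓝 z) :=
    hty.comp htg
  have hz1 : z₀⁻¹ • z = ((1 : G) : G ⧸ K) := by
    rw [← hz₀, MulAction.Quotient.smul_mk]
    exact QuotientGroup.eq.mpr (by simp [K.one_mem])
  have hT1 : Tendsto (fun q : G × G => (QuotientGroup.mk (q.2⁻¹ * (q.1 * y)) : G ⧸ K)) Λ
      (𝓝 ((1 : G) : G ⧸ K)) := by
    have hs := (htc.inv).smul htyΛ
    rw [hz1] at hs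
    refine hs.congr fun q => ?_
    rw [MulAction.Quotient.smul_mk]
    rfl
  have hT2 : Tendsto (fun q : G × G => (QuotientGroup.mk (q.2⁻¹ * (q.1 * x)) : G ⧸ K)) Λ
      (𝓝 ((1 : G) : G ⧸ K)) := by
    have hs := (htc.inv).smul htxΛ
    rw [hz1] at hs
    refine hs.congr fun q => ?_
    rw [MulAction.Quotient.smul_mk]
    rfl
  -- lifts into H
  set lift : G → H := fun w => if hw : w ∈ H then ⟨w, hw⟩ else 1 with hliftdef
  have hDΛ : D ∈ Λ := mem_inf_of_right (mem_principal_self D)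
  have hDK : ∀ q ∈ D, q.2⁻¹ * (q.1 * x) ∈ K := fun q hq => QuotientGroup.eq.mp hq
  have hDH2 : ∀ q ∈ D, q.2⁻¹ * (q.1 * x) ∈ H := fun q hq => hKH (hDK q hq)
  have hDH1 : ∀ q ∈ D, q.2⁻¹ * (q.1 * y) ∈ H := by
    intro q hq
    have h1 : q.2⁻¹ * (q.1 * y) = (q.2⁻¹ * (q.1 * x)) * (x⁻¹ * y) := by group
    rw [h1]
    exact H.mul_mem (hDH2 q hq) hH0
  set f₁ : G × G → H := fun q => lift (q.2⁻¹ * (q.1 * y)) with hf₁def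
  set f₂ : G × G → H := fun q => lift (q.2⁻¹ * (q.1 * x)) with hf₂def
  have hcoe1 : ∀ q ∈ D, ((f₁ q : G)) = q.2⁻¹ * (q.1 * y) := by
    intro q hq; simp only [hf₁def, hliftdef, dif_pos (hDH1 q hq)]
  have hcoe2 : ∀ q ∈ D, ((f₂ q : G)) = q.2⁻¹ * (q.1 * x) := by
    intro q hq; simp only [hf₂def, hliftdef, dif_pos (hDH2 q hq)]
  have hT1' : Tendsto (fun q : G × G => (((f₁ q : G)) : G ⧸ K)) Λ (𝓝 ((1 : G) : G ⧸ K)) := by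
    refine Tendsto.congr' ?_ hT1
    filter_upwards [hDΛ] with q hq
    rw [hcoe1 q hq]
  have hT2' : Tendsto (fun q : G × G => (((f₂ q : G)) : G ⧸ K)) Λ (𝓝 ((1 : G) : G ⧸ K)) := by
    refine Tendsto.congr' ?_ hT2
    filter_upwards [hDΛ] with q hq
    rw [hcoe2 q hq]
  have hq1 := auxA K H hKH hT1'
  have hq2 := auxA K H hKH hT2'
  -- the pair tends to (1,1) and eventually lies in the H-orbit set
  set S' : Set ((H ⧸ K.subgroupOf H) × (H ⧸ K.subgroupOf H)) :=
    {p | ∃ h : H, p = (QuotientGroup.mk (h * h₀), QuotientGroup.mk (h * 1))} with hS'def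
  have hprod : Tendsto (fun q : G × G =>
      ((QuotientGroup.mk (f₁ q) : H ⧸ K.subgroupOf H),
       (QuotientGroup.mk (f₂ q) : H ⧸ K.subgroupOf H))) Λ
      (𝓝 ((QuotientGroup.mk (1 : H) : H ⧸ K.subgroupOf H),
          (QuotientGroup.mk (1 : H) : H ⧸ K.subgroupOf H))) := by
    rw [nhds_prod_eq]
    exact hq1.prodMk hq2
  have hmemS' : ∀ᶠ q in Λ, ((QuotientGroup.mk (f₁ q) : H ⧸ K.subgroupOf H),
      (QuotientGroup.mk (f₂ q) : H ⧸ K.subgroupOf H)) ∈ S' := by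
    filter_upwards [hDΛ] with q hq
    refine ⟨f₂ q, ?_⟩
    have h1 : f₂ q * h₀ = f₁ q := by
      apply Subtype.ext
      push_cast
      rw [hcoe1 q hq, hcoe2 q hq]
      show q.2⁻¹ * (q.1 * x) * (x⁻¹ * y) = q.2⁻¹ * (q.1 * y)
      group
    have h2 : f₂ q * 1 = f₂ q := mul_one _
    rw [h1, h2]
  have hcl : ((QuotientGroup.mk (1 : H) : H ⧸ K.subgroupOf H), (QuotientGroup.mk (1 : H) :
      H ⧸ K.subgroupOf H)) ∈ closure S' :=
    mem_closure_of_tendsto hprod hmemS'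
  refine hHK h₀ 1 ?_ ⟨(QuotientGroup.mk (1 : H) : H ⧸ K.subgroupOf H), hcl⟩
  intro heq
  have h4 : h₀⁻¹ * 1 ∈ K.subgroupOf H := QuotientGroup.eq.mp heq
  rw [mul_one, Subgroup.mem_subgroupOf] at h4
  exact hK0 (by simpa using K.inv_mem h4)
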